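/- arXiv:math/0610582 — 2 statements merged into one kernel-verified Lean document; each statement's English description precedes it below -/
import Mathlib

section
/- If S ⊆ ℕ is multiplicative, then Σ_{n=1}^∞ μ*_S(n) φ(n)^k / n^{2k} = ∏_p (1 − (1 − 1/p)^k Σ_{a ≥ 1, p^a ∉ S} 1/p^{ak}) for every integer k ≥ 2. -/
def udivisors (n : ℕ) : Finset ℕ := n.divisors.filter fun d => Nat.gcd d (n / d) = 1

def mustar (n : ℕ) : ℤ := (-1) ^ n.primeFactors.card

def rhoR (S : Set ℕ) [DecidablePred (· ∈ S)] (n : ℕ) : ℝ := if n ∈ S then 1 else 0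

def mustarSR (S : Set ℕ) [DecidablePred (· ∈ S)] (n : ℕ) : ℝ :=
  ∑ d ∈ udivisors n, rhoR S d * (mustar (n / d) : ℝ)

lemma mem_udivisors {n d : ℕ} :
    d ∈ udivisors n ↔ d ∣ n ∧ n ≠ 0 ∧ Nat.gcd d (n / d) = 1 := by
  simp [udivisors, Nat.mem_divisors, and_assoc]

lemma mustar_one : mustar 1 = 1 := by simp [mustar]

lemma mustar_mul {a b : ℕ} (ha : a ≠ 0) (hb : b ≠ 0) (h : Nat.Coprime a b) :
    mustar (a * b) = mustar a * mustar b := by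
  unfold mustar
  rw [Nat.primeFactors_mul ha hb,
    Finset.card_union_of_disjoint ((Nat.disjoint_primeFactors ha hb).mpr h), pow_add]

lemma udivisors_one : udivisors 1 = {1} := by decide

lemma mustarSR_zero (S : Set ℕ) [DecidablePred (· ∈ S)] : mustarSR S 0 = 0 := by
  simp [mustarSR, udivisors]

lemma mustarSR_one (S : Set ℕ) [DecidablePred (· ∈ S)] (h1 : 1 ∈ S) : mustarSR S 1 = 1 := by
  simp [mustarSR, udivisors_one, rhoR, h1, mustar_one]

lemma udivisors_prime_pow {p : ℕ} (hp : p.Prime) (e : ℕ) :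
    udivisors (p ^ (e + 1)) = {1, p ^ (e + 1)} := by
  ext d
  rw [mem_udivisors]
  simp only [Finset.mem_insert, Finset.mem_singleton]
  constructor
  · rintro ⟨hd, -, hg⟩
    obtain ⟨i, hi, rfl⟩ := (Nat.dvd_prime_pow hp).mp hd
    rcases Nat.eq_zero_or_pos i with h0 | h0
    · subst h0; simp
    rcases eq_or_lt_of_le hi with h1 | h1
    · subst h1; simp
    exfalso
    have hdivpow : p ^ (e + 1) / p ^ i = p ^ (e + 1 - i) := Nat.pow_div hi hp.pos
    have hp1 : p ∣ p ^ i := dvd_pow_self p h0.ne'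
    have hp2 : p ∣ p ^ (e + 1 - i) := dvd_pow_self p (by omega)
    have : p ∣ 1 := by
      rw [← hg, hdivpow]
      exact Nat.dvd_gcd hp1 hp2
    exact hp.one_lt.ne' (Nat.dvd_one.mp this)
  · rintro (rfl | rfl)
    · exact ⟨one_dvd _, pow_ne_zero _ hp.pos.ne', by simp⟩
    · exact ⟨dvd_rfl, pow_ne_zero _ hp.pos.ne',
        by rw [Nat.div_self (pow_pos hp.pos _)]; simp⟩

lemma mustarSR_prime_pow (S : Set ℕ) [DecidablePred (· ∈ S)] (h1 : 1 ∈ S)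
    {p : ℕ} (hp : p.Prime) (e : ℕ) :
    mustarSR S (p ^ (e + 1)) = (if p ^ (e + 1) ∈ S then (1 : ℝ) else 0) - 1 := by
  have hne : (1 : ℕ) ≠ p ^ (e + 1) :=
    (Nat.one_lt_pow (Nat.succ_ne_zero e) hp.one_lt).ne
  have hmu : mustar (p ^ (e + 1)) = -1 := by
    unfold mustar
    rw [Nat.primeFactors_pow p (Nat.succ_ne_zero e), hp.primeFactors]
    simp
  rw [mustarSR, udivisors_prime_pow hp, Finset.sum_pair hne]
  rw [Nat.div_one, Nat.div_self (pow_pos hp.pos _), hmu, mustar_one]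
  simp [rhoR, h1]
  ring

section Mult

variable (S : Set ℕ) [DecidablePred (· ∈ S)]

lemma gcd_mem_udivisors {m n d : ℕ} (hm : m ≠ 0) (h : Nat.Coprime m n)
    (hd : d ∈ udivisors (m * n)) : Nat.gcd d m ∈ udivisors m := by
  obtain ⟨hdvd, hmn0, hg⟩ := mem_udivisors.mp hd
  have hd1 : Nat.gcd d m ∣ m := Nat.gcd_dvd_right _ _
  have hd2 : Nat.gcd d n ∣ n := Nat.gcd_dvd_right _ _
  set d₁ := Nat.gcd d m with hD1
  set d₂ := Nat.gcd d n with hD2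
  have hsplit : d = d₁ * d₂ := by
    have := Nat.Coprime.gcd_mul d h
    rwa [Nat.gcd_eq_left hdvd] at this
  refine mem_udivisors.mpr ⟨hd1, hm, ?_⟩
  have hdd : (m * n) / d = (m / d₁) * (n / d₂) := by
    rw [hsplit]; exact (Nat.div_mul_div_comm hd1 hd2).symm
  have h1d : d₁ ∣ d := by rw [hsplit]; exact dvd_mul_right _ _
  have h2d : m / d₁ ∣ (m * n) / d := by rw [hdd]; exact dvd_mul_right _ _
  have : Nat.gcd d₁ (m / d₁) ∣ 1 := by
    rw [← hg]
    exact Nat.dvd_gcd ((Nat.gcd_dvd_left _ _).trans h1d) ((Nat.gcd_dvd_right _ _).trans h2d)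
  exact Nat.dvd_one.mp this

lemma mul_mem_udivisors {m n d₁ d₂ : ℕ} (h : Nat.Coprime m n)
    (h1 : d₁ ∈ udivisors m) (h2 : d₂ ∈ udivisors n) : d₁ * d₂ ∈ udivisors (m * n) := by
  obtain ⟨hd1, hm0, hg1⟩ := mem_udivisors.mp h1
  obtain ⟨hd2, hn0, hg2⟩ := mem_udivisors.mp h2
  refine mem_udivisors.mpr ⟨mul_dvd_mul hd1 hd2, mul_ne_zero hm0 hn0, ?_⟩
  rw [(Nat.div_mul_div_comm hd1 hd2).symm]
  have c1n : Nat.Coprime d₁ (n / d₂) :=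
    (h.coprime_dvd_left hd1).coprime_dvd_right (Nat.div_dvd_of_dvd hd2)
  have c2m : Nat.Coprime d₂ (m / d₁) :=
    (h.symm.coprime_dvd_left hd2).coprime_dvd_right (Nat.div_dvd_of_dvd hd1)
  exact Nat.Coprime.mul (Nat.Coprime.mul_right hg1 c1n) (Nat.Coprime.mul_right c2m hg2)

lemma rhoR_mul (hmul : ∀ m n : ℕ, 0 < m → 0 < n → Nat.Coprime m n → (m * n ∈ S ↔ m ∈ S ∧ n ∈ S))
    {a b : ℕ} (ha : 0 < a) (hb : 0 < b) (h : Nat.Coprime a b) :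
    rhoR S (a * b) = rhoR S a * rhoR S b := by
  by_cases h1 : a ∈ S <;> by_cases h2 : b ∈ S <;>
    simp [rhoR, h1, h2, hmul a b ha hb h]

lemma mustarSR_mul (hmul : ∀ m n : ℕ, 0 < m → 0 < n → Nat.Coprime m n →
      (m * n ∈ S ↔ m ∈ S ∧ n ∈ S))
    {m n : ℕ} (hm : 0 < m) (hn : 0 < n) (h : Nat.Coprime m n) :
    mustarSR S (m * n) = mustarSR S m * mustarSR S n := by
  rw [mustarSR, mustarSR, mustarSR, Finset.sum_mul_sum, ← Finset.sum_product']
  refine (Finset.sum_nbij' (fun d => (Nat.gcd d m, Nat.gcd d n)) (fun q => q.1 * q.2)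
    ?_ ?_ ?_ ?_ ?_)
  · intro d hd
    rw [Finset.mem_product]
    refine ⟨gcd_mem_udivisors hm.ne' h hd, ?_⟩
    rw [mul_comm m n] at hd
    exact gcd_mem_udivisors hn.ne' h.symm hd
  · intro q hq
    rw [Finset.mem_product] at hq
    exact mul_mem_udivisors h hq.1 hq.2
  · intro d hd
    obtain ⟨hdvd, -, -⟩ := mem_udivisors.mp hd
    have := Nat.Coprime.gcd_mul d h
    rw [Nat.gcd_eq_left hdvd] at this
    exact this.symm
  · rintro ⟨d₁, d₂⟩ hq
    rw [Finset.mem_product] at hq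
    obtain ⟨hd1, hm0, -⟩ := mem_udivisors.mp hq.1
    obtain ⟨hd2, hn0, -⟩ := mem_udivisors.mp hq.2
    have c2m : Nat.Coprime d₂ m := h.symm.coprime_dvd_left hd2
    have c1n : Nat.Coprime d₁ n := h.coprime_dvd_left hd1
    have e1 : Nat.gcd (d₁ * d₂) m = d₁ := by
      rw [Nat.Coprime.gcd_mul_right_cancel d₁ c2m, Nat.gcd_eq_left hd1]
    have e2 : Nat.gcd (d₁ * d₂) n = d₂ := by
      rw [Nat.Coprime.gcd_mul_left_cancel d₂ c1n, Nat.gcd_eq_left hd2]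
    simp [e1, e2]
  · intro d hd
    obtain ⟨hdvd, -, -⟩ := mem_udivisors.mp hd
    set d₁ := Nat.gcd d m with hd₁
    set d₂ := Nat.gcd d n with hd₂
    have hsplit : d = d₁ * d₂ := by
      have := Nat.Coprime.gcd_mul d h
      rwa [Nat.gcd_eq_left hdvd] at this
    have hd1 : d₁ ∣ m := Nat.gcd_dvd_right _ _
    have hd2 : d₂ ∣ n := Nat.gcd_dvd_right _ _
    have hpos1 : 0 < d₁ := Nat.gcd_pos_of_pos_right _ hm
    have hpos2 : 0 < d₂ := Nat.gcd_pos_of_pos_right _ hn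
    have hcop : Nat.Coprime d₁ d₂ := (h.coprime_dvd_left hd1).coprime_dvd_right hd2
    have hdd : (m * n) / d = (m / d₁) * (n / d₂) := by
      rw [hsplit]; exact (Nat.div_mul_div_comm hd1 hd2).symm
    have hcop2 : Nat.Coprime (m / d₁) (n / d₂) :=
      (h.coprime_dvd_left (Nat.div_dvd_of_dvd hd1)).coprime_dvd_right (Nat.div_dvd_of_dvd hd2)
    have hne1 : m / d₁ ≠ 0 := (Nat.div_pos (Nat.le_of_dvd hm hd1) hpos1).ne'
    have hne2 : n / d₂ ≠ 0 := (Nat.div_pos (Nat.le_of_dvd hn hd2) hpos2).ne'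
    calc rhoR S d * (mustar ((m * n) / d) : ℝ)
        = (rhoR S d₁ * rhoR S d₂) * ((mustar (m / d₁) : ℝ) * (mustar (n / d₂) : ℝ)) := by
          rw [hdd, mustar_mul hne1 hne2 hcop2]
          conv_lhs => rw [hsplit, rhoR_mul S hmul hpos1 hpos2 hcop]
          push_cast
          ring
      _ = rhoR S d₁ * (mustar (m / d₁) : ℝ) * (rhoR S d₂ * (mustar (n / d₂) : ℝ)) := by ring

lemma abs_mustarSR_le (h1 : 1 ∈ S)
    (hmul : ∀ m n : ℕ, 0 < m → 0 < n → Nat.Coprime m n → (m * n ∈ S ↔ m ∈ S ∧ n ∈ S))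
    (n : ℕ) : |mustarSR S n| ≤ 1 := by
  induction n using Nat.recOnPosPrimePosCoprime with
  | prime_pow p e hp he =>
    obtain ⟨e, rfl⟩ := Nat.exists_eq_add_of_lt he
    rw [zero_add, mustarSR_prime_pow S h1 hp]
    split_ifs <;> norm_num
  | zero => simp [mustarSR_zero]
  | one => simp [mustarSR_one S h1]
  | coprime a b ha hb hab iha ihb =>
    rw [mustarSR_mul S hmul (by omega) (by omega) hab, abs_mul]
    exact mul_le_one₀ iha (abs_nonneg _) ihb

end Mult

theorem stmt13 (S : Set ℕ) [DecidablePred (· ∈ S)] (k : ℕ) (hk : 2 ≤ k)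
    (h1 : 1 ∈ S)
    (hmul : ∀ m n : ℕ, 0 < m → 0 < n → Nat.Coprime m n → (m * n ∈ S ↔ m ∈ S ∧ n ∈ S)) :
    (∑' n : ℕ, mustarSR S (n + 1) * (Nat.totient (n + 1) : ℝ) ^ k
        / ((n + 1 : ℕ) : ℝ) ^ (2 * k))
      = ∏' p : Nat.Primes,
          (1 - (1 - 1 / ((p : ℕ) : ℝ)) ^ k *
            ∑' a : ℕ, if (p : ℕ) ^ (a + 1) ∉ S
              then (1 : ℝ) / ((p : ℕ) : ℝ) ^ ((a + 1) * k) else 0) := by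
  set F : ℕ → ℝ := fun n => mustarSR S n * (Nat.totient n : ℝ) ^ k / (n : ℝ) ^ (2 * k) with hF
  have hF0 : F 0 = 0 := by simp [hF, mustarSR_zero]
  have hF1 : F 1 = 1 := by simp [hF, mustarSR_one S h1]
  have hFmul : ∀ {m n : ℕ}, Nat.Coprime m n → F (m * n) = F m * F n := by
    intro m n h
    rcases Nat.eq_zero_or_pos m with hm | hm
    · subst hm
      rw [Nat.coprime_zero_left] at h
      subst h
      simp [hF0, hF1]
    rcases Nat.eq_zero_or_pos n with hn | hn
    · subst hn
      rw [Nat.coprime_zero_right] at h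
      subst h
      simp [hF0, hF1]
    simp only [hF]
    rw [mustarSR_mul S hmul hm hn h, Nat.totient_mul h]
    push_cast
    ring
  have hsum : Summable fun n => ‖F n‖ := by
    refine Summable.of_nonneg_of_le (fun n => norm_nonneg _) (fun n => ?_)
      (Real.summable_one_div_nat_pow.mpr one_lt_two)
    rcases Nat.eq_zero_or_pos n with rfl | hn
    · simp [hF0]
    have hn1 : (1 : ℝ) ≤ (n : ℝ) := by exact_mod_cast hn
    have hnn : (0 : ℝ) < (n : ℝ) := by positivity
    have htot : (Nat.totient n : ℝ) ^ k ≤ (n : ℝ) ^ k := by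
      apply pow_le_pow_left₀ (by positivity)
      exact_mod_cast Nat.totient_le n
    calc ‖F n‖ = |mustarSR S n| * ((Nat.totient n : ℝ) ^ k / (n : ℝ) ^ (2 * k)) := by
          simp only [hF, Real.norm_eq_abs]
          rw [mul_div_assoc, abs_mul]
          congr 1
          exact abs_of_nonneg (by positivity)
      _ ≤ 1 * ((n : ℝ) ^ k / (n : ℝ) ^ (2 * k)) := by
          apply mul_le_mul (abs_mustarSR_le S h1 hmul n) _ (by positivity) zero_le_one
          exact div_le_div_of_nonneg_right htot (by positivity) |>.trans_eq rfl
      _ = 1 / (n : ℝ) ^ k := by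
          rw [one_mul, two_mul, pow_add]
          field_simp
      _ ≤ 1 / (n : ℝ) ^ 2 := by
          apply one_div_le_one_div_of_le (by positivity)
          exact pow_le_pow_right₀ hn1 hk
  have hEP : ∏' p : Nat.Primes, ∑' e : ℕ, F ((p : ℕ) ^ e) = ∑' n, F n :=
    EulerProduct.eulerProduct_tprod hF1 hFmul hsum hF0
  have hL : (∑' n : ℕ, mustarSR S (n + 1) * (Nat.totient (n + 1) : ℝ) ^ k
      / ((n + 1 : ℕ) : ℝ) ^ (2 * k)) = ∑' n, F n := by
    rw [Summable.tsum_eq_zero_add hsum.of_norm, hF0, zero_add]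
  rw [hL, ← hEP]
  refine tprod_congr fun p => ?_
  have hp : (p : ℕ).Prime := p.prop
  have hq0 : (0 : ℝ) < ((p : ℕ) : ℝ) := by exact_mod_cast hp.pos
  have hqne : ((p : ℕ) : ℝ) ≠ 0 := hq0.ne'
  have hsummp : Summable fun e : ℕ => F ((p : ℕ) ^ e) :=
    hsum.of_norm.comp_injective (Nat.pow_right_injective hp.two_le)
  rw [Summable.tsum_eq_zero_add hsummp, pow_zero, hF1]
  have hpt : ∀ a : ℕ, F ((p : ℕ) ^ (a + 1)) =
      (-(1 - 1 / ((p : ℕ) : ℝ)) ^ k) *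
        (if (p : ℕ) ^ (a + 1) ∉ S then (1 : ℝ) / ((p : ℕ) : ℝ) ^ ((a + 1) * k) else 0) := by
    intro a
    have htot : (Nat.totient ((p : ℕ) ^ (a + 1)) : ℝ) = (1 - 1 / ((p : ℕ) : ℝ)) * ((p : ℕ) : ℝ) ^ (a + 1) := by
      rw [Nat.totient_prime_pow hp (Nat.succ_pos a)]
      push_cast [hp.one_le]
      field_simp
      ring
    have hden : (((p : ℕ) ^ (a + 1) : ℕ) : ℝ) ^ (2 * k)
        = ((p : ℕ) : ℝ) ^ ((a + 1) * k) * ((p : ℕ) : ℝ) ^ ((a + 1) * k) := by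
      push_cast
      rw [← pow_mul, ← pow_add]
      ring_nf
    simp only [hF, mustarSR_prime_pow S h1 hp a, htot, hden, mul_pow, ← pow_mul]
    by_cases hmem : (p : ℕ) ^ (a + 1) ∈ S
    · simp [hmem]
    · simp only [hmem, if_neg, not_false_iff, if_true, if_false]
      have hppos : (0 : ℝ) < ((p : ℕ) : ℝ) ^ ((a + 1) * k) := by positivity
      field_simp
      ring
  rw [tsum_congr hpt, tsum_mul_left]
  ring
end

section
/- Let S ⊆ ℕ be completely multiplicative (1 ∈ S and ρ_S completely multiplicative) with #(S ∩ [1,x]) = Ax + O(1). Then for every positive integer ℓ, Σ_{n ≤ x, gcd(n,ℓ)=1} ρ_S(n) = A x ∏_{p | ℓ, p ∈ S} (1 − 1/p) + O(θ(ℓ)), uniformly in ℓ and x. -/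
def theta (n : ℕ) : ℕ := 2 ^ n.primeFactors.card

open Finset ArithmeticFunction

section Aux
variable (S : Set ℕ) [DecidablePred (· ∈ S)]

lemma rhoR_nonneg (n : ℕ) : 0 ≤ rhoR S n := by unfold rhoR; split <;> norm_num

lemma rhoR_le_one (n : ℕ) : rhoR S n ≤ 1 := by unfold rhoR; split <;> norm_num

lemma rhoR_mul_s18 (hcm : ∀ m n : ℕ, 0 < m → 0 < n → (m * n ∈ S ↔ m ∈ S ∧ n ∈ S)) {m n : ℕ} (hm : 0 < m) (hn : 0 < n) :
    rhoR S (m * n) = rhoR S m * rhoR S n := by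
  unfold rhoR
  rw [if_congr (hcm m n hm hn) rfl rfl]
  by_cases h1 : m ∈ S <;> by_cases h2 : n ∈ S <;> simp [h1, h2]

lemma rhoR_prod (hcm : ∀ m n : ℕ, 0 < m → 0 < n → (m * n ∈ S ↔ m ∈ S ∧ n ∈ S)) (h1 : 1 ∈ S) (t : Finset ℕ) (ht : ∀ p ∈ t, 0 < p) :
    rhoR S (∏ p ∈ t, p) = ∏ p ∈ t, rhoR S p := by
  classical
  induction t using Finset.induction with
  | empty => simp [rhoR, h1]
  | @insert a s ha ih =>
    rw [Finset.prod_insert ha, Finset.prod_insert ha,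
      rhoR_mul_s18 S hcm (ht a (Finset.mem_insert_self a s))
        (Finset.prod_pos fun p hp => ht p (Finset.mem_insert_of_mem hp)),
      ih fun p hp => ht p (Finset.mem_insert_of_mem hp)]

lemma sum_multiples (hcm : ∀ m n : ℕ, 0 < m → 0 < n → (m * n ∈ S ↔ m ∈ S ∧ n ∈ S)) (N d : ℕ) (hd : 0 < d) :
    ∑ n ∈ (Finset.Icc 1 N).filter (d ∣ ·), rhoR S n
      = rhoR S d * ∑ m ∈ Finset.Icc 1 (N / d), rhoR S m := by
  rw [Finset.mul_sum]
  apply Finset.sum_nbij' (i := fun n => n / d) (j := fun m => d * m)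
  · intro n hn
    simp only [Finset.mem_filter, Finset.mem_Icc] at hn
    obtain ⟨⟨h1n, hnN⟩, hdn⟩ := hn
    simp only [Finset.mem_Icc]
    constructor
    · exact (Nat.one_le_div_iff hd).2 (Nat.le_of_dvd h1n hdn)
    · exact Nat.div_le_div_right hnN
  · intro m hm
    simp only [Finset.mem_Icc] at hm
    simp only [Finset.mem_filter, Finset.mem_Icc]
    refine ⟨⟨Nat.one_le_iff_ne_zero.2 ?_, (Nat.le_div_iff_mul_le hd).1 hm.2 |>.trans_eq' (mul_comm m d) |>.trans_eq rfl⟩, Dvd.intro m rfl⟩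
    exact Nat.mul_ne_zero hd.ne' (by omega)
  · intro n hn
    simp only [Finset.mem_filter] at hn
    exact Nat.mul_div_cancel' hn.2
  · intro m hm
    exact Nat.mul_div_cancel_left m hd
  · intro n hn
    simp only [Finset.mem_filter, Finset.mem_Icc] at hn
    obtain ⟨⟨h1n, hnN⟩, hdn⟩ := hn
    have hpos : 0 < n / d := (Nat.one_le_div_iff hd).2 (Nat.le_of_dvd h1n hdn)
    conv_lhs => rw [← Nat.mul_div_cancel' hdn]
    rw [rhoR_mul_s18 S hcm hd hpos]

lemma sum_moebius_divisors (k : ℕ) (hk : k ≠ 0) :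
    (∑ d ∈ k.divisors, ((moebius d : ℤ) : ℝ)) = if k = 1 then 1 else 0 := by
  have h := congrArg (fun f : ArithmeticFunction ℤ => f k) moebius_mul_coe_zeta
  simp only [coe_mul_zeta_apply, one_apply] at h
  have : ((∑ d ∈ k.divisors, moebius d : ℤ) : ℝ) = ((if k = 1 then 1 else 0 : ℤ) : ℝ) := by
    exact_mod_cast congrArg (fun z : ℤ => (z : ℝ)) h
  rw [Int.cast_sum] at this
  rw [this]
  split <;> norm_num

lemma moebius_swap (N l : ℕ) (hl : 0 < l) :
    ∑ n ∈ (Finset.Icc 1 N).filter (fun n => Nat.gcd n l = 1), rhoR S n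
      = ∑ d ∈ l.divisors, ((moebius d : ℤ) : ℝ) * ∑ n ∈ (Finset.Icc 1 N).filter (d ∣ ·), rhoR S n := by
  classical
  simp_rw [Finset.mul_sum, Finset.sum_filter]
  rw [Finset.sum_comm]
  apply Finset.sum_congr rfl
  intro n hn
  simp only [Finset.mem_Icc] at hn
  have hn0 : n ≠ 0 := Nat.one_le_iff_ne_zero.1 hn.1
  have hgcd : (l.divisors.filter (· ∣ n)) = (Nat.gcd n l).divisors := by
    ext e
    simp only [Finset.mem_filter, Nat.mem_divisors]
    constructor
    · rintro ⟨⟨hel, -⟩, hen⟩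
      exact ⟨Nat.dvd_gcd hen hel, Nat.gcd_ne_zero_left hn0⟩
    · rintro ⟨he, -⟩
      exact ⟨⟨he.trans (Nat.gcd_dvd_right n l), hl.ne'⟩, he.trans (Nat.gcd_dvd_left n l)⟩
  calc (if Nat.gcd n l = 1 then rhoR S n else 0)
      = (∑ d ∈ (Nat.gcd n l).divisors, ((moebius d : ℤ) : ℝ)) * rhoR S n := by
        rw [sum_moebius_divisors _ (Nat.gcd_ne_zero_left hn0)]
        split <;> simp
    _ = ∑ d ∈ l.divisors.filter (· ∣ n), ((moebius d : ℤ) : ℝ) * rhoR S n := by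
        rw [hgcd, Finset.sum_mul]
    _ = ∑ d ∈ l.divisors, if d ∣ n then ((moebius d : ℤ) : ℝ) * rhoR S n else 0 := by
        rw [Finset.sum_filter]

lemma prod_term (hcm : ∀ m n : ℕ, 0 < m → 0 < n → (m * n ∈ S ↔ m ∈ S ∧ n ∈ S)) (h1 : 1 ∈ S) (t : Finset ℕ) (ht : ∀ p ∈ t, p.Prime) :
    ((moebius (∏ p ∈ t, p) : ℤ) : ℝ) * rhoR S (∏ p ∈ t, p) / ((∏ p ∈ t, p : ℕ) : ℝ)
      = ∏ p ∈ t, (-(rhoR S p) / (p : ℝ)) := by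
  classical
  induction t using Finset.induction with
  | empty => simp [rhoR, h1]
  | @insert a s ha ih =>
    have hap : a.Prime := ht a (Finset.mem_insert_self a s)
    have hsp : ∀ p ∈ s, p.Prime := fun p hp => ht p (Finset.mem_insert_of_mem hp)
    have hPpos : 0 < ∏ p ∈ s, p := Finset.prod_pos fun p hp => (hsp p hp).pos
    have hcop : Nat.Coprime a (∏ p ∈ s, p) := by
      apply Nat.Coprime.prod_right
      intro p hp
      exact (Nat.coprime_primes hap (hsp p hp)).2 (fun h => ha (h ▸ hp))
    simp only [Finset.prod_insert ha]
    rw [isMultiplicative_moebius.map_mul_of_coprime hcop,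
      rhoR_mul_s18 S hcm hap.pos hPpos, ← ih hsp, moebius_apply_prime hap]
    have hane : (a : ℝ) ≠ 0 := Nat.cast_ne_zero.2 hap.pos.ne'
    have hPne : ((∏ p ∈ s, p : ℕ) : ℝ) ≠ 0 := Nat.cast_ne_zero.2 hPpos.ne'
    push_cast
    field_simp

lemma normFactors_toFinset (l : ℕ) :
    (UniqueFactorizationMonoid.normalizedFactors l).toFinset = l.primeFactors := by
  rw [Nat.factors_eq]
  simp

lemma sum_div_eq_prod (hcm : ∀ m n : ℕ, 0 < m → 0 < n → (m * n ∈ S ↔ m ∈ S ∧ n ∈ S)) (h1 : 1 ∈ S) (l : ℕ) (hl : 0 < l) :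
    ∑ d ∈ l.divisors, ((moebius d : ℤ) : ℝ) * rhoR S d / (d : ℝ)
      = ∏ p ∈ l.primeFactors.filter (· ∈ S), (1 - 1 / (p : ℝ)) := by
  classical
  have h0 : ∑ d ∈ l.divisors, ((moebius d : ℤ) : ℝ) * rhoR S d / (d : ℝ)
      = ∑ d ∈ l.divisors.filter Squarefree, ((moebius d : ℤ) : ℝ) * rhoR S d / (d : ℝ) := by
    rw [Finset.sum_filter_of_ne]
    intro d hd hne
    by_contra hsq
    rw [moebius_eq_zero_of_not_squarefree hsq] at hne
    simp at hne
  rw [h0, Nat.sum_divisors_filter_squarefree hl.ne']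
  rw [show ((UniqueFactorizationMonoid.normalizedFactors l).toFinset : Finset ℕ) = l.primeFactors from normFactors_toFinset l]
  have hterm : ∀ t ∈ l.primeFactors.powerset,
      ((moebius (t.val.prod) : ℤ) : ℝ) * rhoR S (t.val.prod) / ((t.val.prod : ℕ) : ℝ)
        = ∏ p ∈ t, (-(rhoR S p) / (p : ℝ)) := by
    intro t htt
    rw [Finset.mem_powerset] at htt
    have : (t.val.prod) = ∏ p ∈ t, p := by
      rw [Finset.prod_eq_multiset_prod]; simp
    rw [this]
    exact prod_term S hcm h1 t fun p hp => Nat.prime_of_mem_primeFactors (htt hp)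
  rw [Finset.sum_congr rfl hterm]
  have hpa := Finset.prod_add (fun p : ℕ => -(rhoR S p) / (p : ℝ)) (fun _ : ℕ => (1 : ℝ)) l.primeFactors
  simp only [Finset.prod_const_one, mul_one] at hpa
  rw [← hpa, Finset.prod_filter]
  apply Finset.prod_congr rfl
  intro p hp
  by_cases hps : p ∈ S <;> simp [rhoR, hps]
  ring

lemma card_squarefree_divisors (l : ℕ) (hl : 0 < l) :
    (l.divisors.filter Squarefree).card = theta l := by
  classical
  have h := Nat.sum_divisors_filter_squarefree (n := l) hl.ne' (f := fun _ => (1 : ℕ))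
  rw [normFactors_toFinset l] at h
  simpa [theta, Finset.card_powerset] using h

end Aux

theorem stmt18 (S : Set ℕ) [DecidablePred (· ∈ S)] (A : ℝ)
    (h1 : 1 ∈ S)
    (hcm : ∀ m n : ℕ, 0 < m → 0 < n → (m * n ∈ S ↔ m ∈ S ∧ n ∈ S))
    (hA : ∃ C0 : ℝ, ∀ x : ℝ, 1 ≤ x →
      |(((Finset.Icc 1 ⌊x⌋₊).filter (· ∈ S)).card : ℝ) - A * x| ≤ C0) :
    ∃ C : ℝ, ∀ x : ℝ, 1 ≤ x → ∀ l : ℕ, 1 ≤ l →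
      |(∑ n ∈ (Finset.Icc 1 ⌊x⌋₊).filter (fun n => Nat.gcd n l = 1), rhoR S n)
          - A * x * ∏ p ∈ l.primeFactors.filter (· ∈ S), (1 - 1 / (p : ℝ))|
        ≤ C * (theta l : ℝ) := by
  classical
  obtain ⟨C0, hC0⟩ := hA
  have hC0nn : 0 ≤ C0 := le_trans (abs_nonneg _) (hC0 1 le_rfl)
  set B : ℝ := C0 + |A| with hB
  have hBnn : 0 ≤ B := by positivity
  refine ⟨B, ?_⟩
  intro x hx l hl
  have hl0 : 0 < l := hl
  set N := ⌊x⌋₊ with hN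
  -- F k = card of filter
  have Fcard : ∀ k : ℕ, ∑ m ∈ Finset.Icc 1 k, rhoR S m
      = (((Finset.Icc 1 k).filter (· ∈ S)).card : ℝ) := by
    intro k
    simp [rhoR, Finset.sum_boole]
  -- per-divisor estimate
  have hest : ∀ d ∈ l.divisors,
      |(∑ m ∈ Finset.Icc 1 (N / d), rhoR S m) - A * x / d| ≤ B := by
    intro d hd
    have hdpos : 0 < d := Nat.pos_of_mem_divisors hd
    have hdR : (0 : ℝ) < d := Nat.cast_pos.2 hdpos
    have hfloor : N / d = ⌊x / (d : ℝ)⌋₊ := (Nat.floor_div_natCast x d).symm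
    by_cases hxd : 1 ≤ x / (d : ℝ)
    · have := hC0 (x / (d : ℝ)) hxd
      rw [← hfloor] at this
      rw [Fcard]
      calc |(((Finset.Icc 1 (N / d)).filter (· ∈ S)).card : ℝ) - A * x / d|
          = |(((Finset.Icc 1 (N / d)).filter (· ∈ S)).card : ℝ) - A * (x / d)| := by
            ring_nf
        _ ≤ C0 := this
        _ ≤ B := by simp [hB, abs_nonneg]
    · push_neg at hxd
      have hNd : N / d = 0 := by
        rw [hfloor]
        exact Nat.floor_eq_zero.2 hxd
      rw [hNd]
      have hzero : ∑ m ∈ Finset.Icc 1 0, rhoR S m = 0 := by simp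
      rw [hzero, zero_sub, abs_neg]
      have hxdpos : 0 < x / (d : ℝ) := div_pos (lt_of_lt_of_le one_pos hx) hdR
      calc |A * x / d| = |A| * (x / d) := by
            rw [mul_div_assoc, abs_mul, abs_of_pos hxdpos]
        _ ≤ |A| * 1 := by
            apply mul_le_mul_of_nonneg_left (le_of_lt hxd) (abs_nonneg A)
        _ ≤ B := by simp [hB, hC0nn]
  -- main identity
  have key1 : (∑ n ∈ (Finset.Icc 1 N).filter (fun n => Nat.gcd n l = 1), rhoR S n)
      = ∑ d ∈ l.divisors, ((moebius d : ℤ) : ℝ) * rhoR S d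
          * ∑ m ∈ Finset.Icc 1 (N / d), rhoR S m := by
    rw [moebius_swap S N l hl0]
    apply Finset.sum_congr rfl
    intro d hd
    rw [sum_multiples S hcm N d (Nat.pos_of_mem_divisors hd), mul_assoc]
  have key2 : A * x * ∏ p ∈ l.primeFactors.filter (· ∈ S), (1 - 1 / (p : ℝ))
      = ∑ d ∈ l.divisors, ((moebius d : ℤ) : ℝ) * rhoR S d * (A * x / d) := by
    rw [← sum_div_eq_prod S hcm h1 l hl0, Finset.mul_sum]
    apply Finset.sum_congr rfl
    intro d hd
    ring
  rw [key1, key2, ← Finset.sum_sub_distrib]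
  calc |∑ d ∈ l.divisors, (((moebius d : ℤ) : ℝ) * rhoR S d
          * ∑ m ∈ Finset.Icc 1 (N / d), rhoR S m
          - ((moebius d : ℤ) : ℝ) * rhoR S d * (A * x / d))|
      ≤ ∑ d ∈ l.divisors, |((moebius d : ℤ) : ℝ) * rhoR S d
          * ∑ m ∈ Finset.Icc 1 (N / d), rhoR S m
          - ((moebius d : ℤ) : ℝ) * rhoR S d * (A * x / d)| :=
        Finset.abs_sum_le_sum_abs _ _
    _ ≤ ∑ d ∈ l.divisors, |((moebius d : ℤ) : ℝ)| * B := by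
        apply Finset.sum_le_sum
        intro d hd
        rw [← mul_sub, abs_mul, abs_mul]
        calc |((moebius d : ℤ) : ℝ)| * |rhoR S d|
              * |(∑ m ∈ Finset.Icc 1 (N / d), rhoR S m) - A * x / d|
            ≤ |((moebius d : ℤ) : ℝ)| * 1 * B := by
              apply mul_le_mul
              · apply mul_le_mul_of_nonneg_left _ (abs_nonneg _)
                rw [abs_of_nonneg (rhoR_nonneg S d)]
                exact rhoR_le_one S d
              · exact hest d hd
              · exact abs_nonneg _
              · positivity
          _ = |((moebius d : ℤ) : ℝ)| * B := by ring
    _ ≤ (theta l : ℝ) * B := by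
        have hsum : ∑ d ∈ l.divisors, |((moebius d : ℤ) : ℝ)| ≤ (theta l : ℝ) := by
          have h1' : ∑ d ∈ l.divisors, |((moebius d : ℤ) : ℝ)|
              = ∑ d ∈ l.divisors.filter Squarefree, |((moebius d : ℤ) : ℝ)| := by
            rw [Finset.sum_filter_of_ne]
            intro d hd hne
            by_contra hsq
            rw [moebius_eq_zero_of_not_squarefree hsq] at hne
            simp at hne
          rw [h1']
          calc ∑ d ∈ l.divisors.filter Squarefree, |((moebius d : ℤ) : ℝ)|
              ≤ ∑ d ∈ l.divisors.filter Squarefree, 1 := by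
                apply Finset.sum_le_sum
                intro d hd
                rw [Finset.mem_filter] at hd
                rw [moebius_apply_of_squarefree hd.2]
                simp [abs_pow]
            _ = ((l.divisors.filter Squarefree).card : ℝ) := by simp
            _ = (theta l : ℝ) := by rw [card_squarefree_divisors l hl0]
        rw [← Finset.sum_mul]
        exact mul_le_mul_of_nonneg_right hsum hBnn
    _ = B * (theta l : ℝ) := mul_comm _ _
end
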